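/- For every odd integer n ≥ 3 there exist a finite simple graph Γ and n pairwise distinct distinguished vertices x₁, …, x_n of Γ such that for every subset S ⊆ {x₁, …, x_n}, the number of perfect matchings of the induced subgraph Γ − S equals 1 if |S| is odd and equals 0 if |S| is even. -/

import Mathlib

/-- A matching in a graph, given as a finite set of edges of the graph that are pairwise
vertex-disjoint. -/
def IsMatchingIn {V : Type*} (G : SimpleGraph V) (M : Finset (Sym2 V)) : Prop :=
  (∀ e ∈ M, e ∈ G.edgeSet) ∧ ∀ e ∈ M, ∀ f ∈ M, e ≠ f → ∀ v ∈ e, v ∉ f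

/-- A matching of `G` whose support is exactly the set `A`. -/
def MatchOn {V : Type*} (G : SimpleGraph V) (A : Set V) (M : Finset (Sym2 V)) : Prop :=
  (∀ e ∈ M, e ∈ G.edgeSet) ∧
  (∀ e ∈ M, ∀ f ∈ M, e ≠ f → ∀ v ∈ e, v ∉ f) ∧
  (∀ v, v ∈ A ↔ ∃ e ∈ M, v ∈ e)

lemma card_pm_eq {V : Type*} (G : SimpleGraph V) (A : Set V) :
    Nat.card {M : Finset (Sym2 ↥A) // IsMatchingIn (G.induce A) M ∧ ∀ w : ↥A, ∃ e ∈ M, w ∈ e}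
      = Nat.card {M : Finset (Sym2 V) // MatchOn G A M} := by
  classical
  have memA : ∀ (N : Finset (Sym2 V)), MatchOn G A N → ∀ e ∈ N, ∀ v ∈ e, v ∈ A := by
    intro N hN e he v hv
    exact (hN.2.2 v).2 ⟨e, he, hv⟩
  refine Nat.card_eq_of_bijective
    (fun M => ⟨(M : {M : Finset (Sym2 ↥A) // IsMatchingIn (G.induce A) M ∧
        ∀ w : ↥A, ∃ e ∈ M, w ∈ e}).1.image (Sym2.map (Subtype.val)), ?_, ?_, ?_⟩) ⟨?_, ?_⟩
  · -- edges
    intro e' he'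
    obtain ⟨e, he, rfl⟩ := Finset.mem_image.mp he'
    obtain ⟨M, hM, _⟩ := M
    have := hM.1 e he
    induction e using Sym2.ind with
    | _ a b =>
      rw [SimpleGraph.mem_edgeSet] at this
      simpa using this
  · -- disjoint
    intro e' he' f' hf' hne v hve hvf
    obtain ⟨e, he, rfl⟩ := Finset.mem_image.mp he'
    obtain ⟨f, hf, rfl⟩ := Finset.mem_image.mp hf'
    obtain ⟨u, hu, rfl⟩ := Sym2.mem_map.mp hve
    obtain ⟨w, hw, hwu⟩ := Sym2.mem_map.mp hvf
    have hef : e ≠ f := fun h => hne (by rw [h])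
    obtain ⟨M, hM, _⟩ := M
    have hwu' : w = u := Subtype.val_injective hwu
    exact hM.2 e he f hf hef u hu (hwu' ▸ hw)
  · -- support
    obtain ⟨M, hM, hcov⟩ := M
    intro v
    constructor
    · intro hv
      obtain ⟨e, he, hwe⟩ := hcov ⟨v, hv⟩
      exact ⟨_, Finset.mem_image_of_mem _ he, Sym2.mem_map.mpr ⟨⟨v, hv⟩, hwe, rfl⟩⟩
    · rintro ⟨e', he', hv⟩
      obtain ⟨e, he, rfl⟩ := Finset.mem_image.mp he'
      obtain ⟨u, _, rfl⟩ := Sym2.mem_map.mp hv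
      exact u.2
  · -- injective
    rintro ⟨M, hM⟩ ⟨N, hN⟩ h
    have := congrArg Subtype.val h
    simp only at this
    have := Finset.image_injective (Sym2.map.injective Subtype.val_injective) this
    exact Subtype.ext this
  · -- surjective
    rintro ⟨N, hN⟩
    by_cases hA : A.Nonempty
    · obtain ⟨a₀, ha₀⟩ := hA
      set r : V → ↥A := fun v => if h : v ∈ A then ⟨v, h⟩ else ⟨a₀, ha₀⟩ with hr
      have hrval : ∀ v ∈ A, (r v : V) = v := by
        intro v hv; simp [hr, hv]
      have himg : (N.image (Sym2.map r)).image (Sym2.map (Subtype.val)) = N := by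
        rw [Finset.image_image]
        have : ∀ e ∈ N, (Sym2.map Subtype.val ∘ Sym2.map r) e = id e := by
          intro e he
          simp only [Function.comp_apply, Sym2.map_map, id_eq]
          have : Sym2.map (Subtype.val ∘ r) e = Sym2.map id e :=
            Sym2.map_congr (fun v hv => hrval v (memA N hN e he v hv))
          simpa using this
        rw [Finset.image_congr this, Finset.image_id]
      refine ⟨⟨N.image (Sym2.map r), ⟨?_, ?_⟩, ?_⟩, Subtype.ext himg⟩
      · -- edges of induced graph
        intro e' he'
        obtain ⟨e, he, rfl⟩ := Finset.mem_image.mp he'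
        have hedge := hN.1 e he
        have hsup := memA N hN e he
        induction e using Sym2.ind with
        | _ a b =>
          rw [SimpleGraph.mem_edgeSet] at hedge
          have ha : a ∈ A := hsup a (by simp)
          have hb : b ∈ A := hsup b (by simp)
          have : Sym2.map r s(a, b) = s(⟨a, ha⟩, ⟨b, hb⟩) := by
            simp [hr, ha, hb]
          rw [this, SimpleGraph.mem_edgeSet]
          exact hedge
      · -- disjoint
        intro e' he' f' hf' hne w hwe hwf
        obtain ⟨e, he, rfl⟩ := Finset.mem_image.mp he'
        obtain ⟨f, hf, rfl⟩ := Finset.mem_image.mp hf'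
        have hef : e ≠ f := fun h => hne (by rw [h])
        obtain ⟨u, hu, hu'⟩ := Sym2.mem_map.mp hwe
        obtain ⟨u', hu'', hu'''⟩ := Sym2.mem_map.mp hwf
        have hua : u ∈ A := memA N hN e he u hu
        have hua' : u' ∈ A := memA N hN f hf u' hu''
        have h1 : u = (w : V) := by rw [← hu']; exact (hrval u hua).symm
        have h2 : u' = (w : V) := by rw [← hu''']; exact (hrval u' hua').symm
        exact hN.2.1 e he f hf hef u hu ((h2.trans h1.symm) ▸ hu'')
      · -- cover
        intro w
        obtain ⟨e, he, hwe⟩ := (hN.2.2 (w : V)).1 w.2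
        refine ⟨Sym2.map r e, Finset.mem_image_of_mem _ he, ?_⟩
        refine Sym2.mem_map.mpr ⟨(w : V), hwe, ?_⟩
        exact Subtype.ext (hrval (w : V) w.2)
    · -- A empty
      have hAe : A = ∅ := Set.not_nonempty_iff_eq_empty.mp hA
      have hNe : N = ∅ := by
        rw [Finset.eq_empty_iff_forall_notMem]
        intro e he
        induction e using Sym2.ind with
        | _ a b =>
          have : a ∈ A := memA N hN _ he a (by simp)
          rw [hAe] at this
          exact this
      refine ⟨⟨∅, ⟨by simp, by simp⟩, ?_⟩, ?_⟩
      · intro w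
        exact absurd w.2 (Set.eq_empty_iff_forall_notMem.mp hAe _)
      · exact Subtype.ext (by simp [hNe])

/-- The inductive property: a graph with `n` distinguished vertices whose removal patterns
count perfect matchings by parity. -/
def GoodN (n : ℕ) : Prop :=
  ∃ (V : Type) (_ : Fintype V) (Γ : SimpleGraph V) (x : Fin n ↪ V),
    ∀ T : Finset (Fin n),
      Nat.card {M : Finset (Sym2 V) // MatchOn Γ {v : V | v ∉ ⇑x '' ↑T} M} =
        if Odd T.card then 1 else 0

lemma matchOn_card_of_empty {V : Type*} (G : SimpleGraph V) {A : Set V} (hA : A = ∅) :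
    Nat.card {M : Finset (Sym2 V) // MatchOn G A M} = 1 := by
  have hu : ∀ M : Finset (Sym2 V), MatchOn G A M → M = ∅ := by
    intro M hM
    rw [Finset.eq_empty_iff_forall_notMem]
    intro e he
    induction e using Sym2.ind with
    | _ a b =>
      have : a ∈ A := (hM.2.2 a).2 ⟨_, he, by simp⟩
      exact Set.eq_empty_iff_forall_notMem.mp hA _ this
  have hm : MatchOn G A (∅ : Finset (Sym2 V)) := by
    refine ⟨by simp, by simp, fun v => ?_⟩
    simp [Set.eq_empty_iff_forall_notMem.mp hA v]
  have : Unique {M : Finset (Sym2 V) // MatchOn G A M} :=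
    ⟨⟨⟨∅, hm⟩⟩, fun M => Subtype.ext (hu M.1 M.2)⟩
  exact Nat.card_unique

lemma goodN_one : GoodN 1 := by
  classical
  refine ⟨Fin 1, inferInstance, ⊥, Function.Embedding.refl _, fun T => ?_⟩
  by_cases h0 : (0 : Fin 1) ∈ T
  · have hT : T = {0} := by
      apply Finset.eq_of_subset_of_card_le
      · intro i hi
        simp [Subsingleton.elim i 0]
      · exact Finset.card_le_card (by simpa using h0)
    have hA : {v : Fin 1 | v ∉ ⇑(Function.Embedding.refl (Fin 1)) '' ↑T} = ∅ := by
      rw [Set.eq_empty_iff_forall_notMem]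
      intro v hv
      exact hv ⟨0, by simp [hT], by simp [Subsingleton.elim v 0]⟩
    rw [matchOn_card_of_empty _ hA, hT]
    simp
  · have hT : T = ∅ := by
      rw [Finset.eq_empty_iff_forall_notMem]
      intro i hi
      exact h0 (by simpa [Subsingleton.elim i 0] using hi)
    subst hT
    have : IsEmpty {M : Finset (Sym2 (Fin 1)) // MatchOn ⊥
        {v : Fin 1 | v ∉ ⇑(Function.Embedding.refl (Fin 1)) '' (↑(∅ : Finset (Fin 1)))} M} := by
      constructor
      rintro ⟨M, hM⟩
      obtain ⟨e, he, -⟩ := (hM.2.2 0).1 (by simp)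
      simpa using hM.1 e he
    rw [Nat.card_of_isEmpty]
    simp

open Sum in
/-- Adjacency for the step construction: the inner graph plus a triangle `u, v, hub`. -/
def SAdj {V' : Type} (Γ' : SimpleGraph V') (hub : V') : V' ⊕ Fin 2 → V' ⊕ Fin 2 → Prop
  | inl a, inl b => Γ'.Adj a b
  | inl a, inr _ => a = hub
  | inr _, inl a => a = hub
  | inr i, inr j => i ≠ j

open Sum in
/-- The step graph. -/
def SG {V' : Type} (Γ' : SimpleGraph V') (hub : V') : SimpleGraph (V' ⊕ Fin 2) where
  Adj := SAdj Γ' hub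
  symm := by
    constructor
    rintro (a | i) (b | j) h
    · exact h.symm
    · exact h
    · exact h
    · exact h.symm
  loopless := by
    constructor
    rintro (a | i) h
    · exact Γ'.irrefl h
    · exact h rfl

open Sum in
@[simp] lemma SG_adj_inl_inl {V' : Type} (Γ' : SimpleGraph V') (hub : V') (a b : V') :
    (SG Γ' hub).Adj (inl a) (inl b) ↔ Γ'.Adj a b := Iff.rfl

open Sum in
@[simp] lemma SG_adj_inl_inr {V' : Type} (Γ' : SimpleGraph V') (hub : V') (a : V') (i : Fin 2) :
    (SG Γ' hub).Adj (inl a) (inr i) ↔ a = hub := Iff.rfl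

open Sum in
@[simp] lemma SG_adj_inr_inl {V' : Type} (Γ' : SimpleGraph V') (hub : V') (a : V') (i : Fin 2) :
    (SG Γ' hub).Adj (inr i) (inl a) ↔ a = hub := Iff.rfl

open Sum in
@[simp] lemma SG_adj_inr_inr {V' : Type} (Γ' : SimpleGraph V') (hub : V') (i j : Fin 2) :
    (SG Γ' hub).Adj (inr i) (inr j) ↔ i ≠ j := Iff.rfl

open Sum in
/-- The distinguished vertices of the step graph: the two new pair vertices, followed by
the inner distinguished vertices other than the hub. -/
def xEmb {V' : Type} {k : ℕ} (x' : Fin (k+1) ↪ V') : Fin (k+2) ↪ V' ⊕ Fin 2 where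
  toFun i := if h : i.val < 2 then inr ⟨i.val, h⟩ else inl (x' ⟨i.val - 1, by omega⟩)
  inj' := by
    intro i j hij
    by_cases hi : i.val < 2 <;> by_cases hj : j.val < 2 <;> simp [hi, hj] at hij
    · exact Fin.ext hij
    · exact Fin.ext (by omega)
lemma sym2_decomp {α : Type*} (e : Sym2 α) : ∃ v w, e = s(v, w) := by
  induction e using Sym2.ind with
  | _ v w => exact ⟨v, w, rfl⟩

/-- successor into `Fin (k+2)` -/
def fsucc {k : ℕ} (j : Fin (k+1)) : Fin (k+2) := ⟨j.val + 1, by omega⟩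

/-- predecessor into `Fin (k+1)` -/
def fpred {k : ℕ} (i : Fin (k+2)) : Fin (k+1) := ⟨i.val - 1, by omega⟩

@[simp] lemma fsucc_val {k : ℕ} (j : Fin (k+1)) : (fsucc j).val = j.val + 1 := rfl
@[simp] lemma fpred_val {k : ℕ} (i : Fin (k+2)) : (fpred i).val = i.val - 1 := rfl

open Sum in
lemma goodN_step (k : ℕ) (h : GoodN (k+1)) : GoodN (k+2) := by
  classical
  obtain ⟨V', instV', Γ', x', hV'⟩ := h
  set hub : V' := x' 0 with hhub
  refine ⟨V' ⊕ Fin 2, inferInstance, SG Γ' hub, xEmb x', fun T => ?_⟩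
  set x : Fin (k+2) ↪ V' ⊕ Fin 2 := xEmb x' with hxdef
  set xb : Prop := ¬(((0 : Fin (k+2)) ∈ T) ↔ ((1 : Fin (k+2)) ∈ T)) with hxbdef
  set T' : Finset (Fin (k+1)) :=
    (if xb then {0} else ∅) ∪
      (T.filter fun i => 2 ≤ i.val).image fpred with hT'def
  set A : Set (V' ⊕ Fin 2) := {v | v ∉ ⇑x '' ↑T} with hAdef
  set A' : Set V' := {v | v ∉ ⇑x' '' ↑T'} with hA'def
  -- basic facts about x
  have hx_lt : ∀ (i : Fin (k+2)) (h2 : i.val < 2), x i = inr ⟨i.val, h2⟩ := by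
    intro i h2
    simp [hxdef, xEmb, h2, show i.val ≤ 1 by omega]
  have hx_ge : ∀ (i : Fin (k+2)), 2 ≤ i.val → x i = inl (x' (fpred i)) := by
    intro i h2
    simp [hxdef, xEmb, Nat.not_lt.mpr h2, fpred, show ¬ i.val ≤ 1 by omega]
  have hx0 : x 0 = inr 0 := by
    rw [hx_lt 0 (by simp)]
    exact congrArg inr (Fin.ext (by simp))
  have hx1 : x 1 = inr 1 := by
    rw [hx_lt 1 (by simp)]
    exact congrArg inr (Fin.ext (by simp))
  have hxeq_inr : ∀ (t : Fin (k+2)) (i : Fin 2), x t = inr i ↔ t.val = i.val := by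
    intro t i
    by_cases h2 : t.val < 2
    · rw [hx_lt t h2]
      simp [Fin.ext_iff]
    · rw [hx_ge t (by omega)]
      exact iff_of_false (by simp) (by omega)
  have hxeq_inl : ∀ (t : Fin (k+2)) (a : V'),
      x t = inl a ↔ 2 ≤ t.val ∧ x' (fpred t) = a := by
    intro t a
    by_cases h2 : t.val < 2
    · rw [hx_lt t h2]
      exact iff_of_false (by simp) (by omega)
    · rw [hx_ge t (by omega)]
      simp [show 2 ≤ t.val by omega]
  have hAmem : ∀ v, v ∈ A ↔ ¬∃ t ∈ T, x t = v := by
    intro v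
    simp [hAdef, Set.mem_image]
  have hA'mem : ∀ a, a ∈ A' ↔ ¬∃ j ∈ T', x' j = a := by
    intro a
    simp [hA'def, Set.mem_image]
  have hmemT' : ∀ j : Fin (k+1), j ∈ T' ↔
      (j = 0 ∧ xb) ∨ (1 ≤ j.val ∧ fsucc j ∈ T) := by
    intro j
    rw [hT'def, Finset.mem_union]
    constructor
    · rintro (hj | hj)
      · by_cases hxb : xb
        · rw [if_pos hxb] at hj
          exact Or.inl ⟨Finset.mem_singleton.mp hj, hxb⟩
        · rw [if_neg hxb] at hj
          exact absurd hj (Finset.notMem_empty _)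
      · obtain ⟨i, hi, hij⟩ := Finset.mem_image.mp hj
        obtain ⟨hiT, hi2⟩ := Finset.mem_filter.mp hi
        right
        have hjv : j.val = i.val - 1 := congrArg Fin.val hij.symm
        refine ⟨by omega, ?_⟩
        have : fsucc j = i := Fin.ext (by simp only [fsucc_val]; omega)
        rw [this]; exact hiT
    · rintro (⟨rfl, hxb⟩ | ⟨hj1, hjT⟩)
      · exact Or.inl (by rw [if_pos hxb]; exact Finset.mem_singleton_self _)
      · refine Or.inr (Finset.mem_image.mpr ⟨fsucc j,
          Finset.mem_filter.mpr ⟨hjT, by simp only [fsucc_val]; omega⟩,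
          Fin.ext (by simp)⟩)
  -- membership facts for A
  have h0A : inr 0 ∈ A ↔ (0 : Fin (k+2)) ∉ T := by
    rw [hAmem]
    constructor
    · intro hv h0
      exact hv ⟨0, h0, hx0⟩
    · rintro h0 ⟨t, ht, hxt⟩
      rw [hxeq_inr] at hxt
      have : t = 0 := Fin.ext (by simpa using hxt)
      exact h0 (this ▸ ht)
  have h1A : inr 1 ∈ A ↔ (1 : Fin (k+2)) ∉ T := by
    rw [hAmem]
    constructor
    · intro hv h1
      exact hv ⟨1, h1, hx1⟩
    · rintro h1 ⟨t, ht, hxt⟩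
      rw [hxeq_inr] at hxt
      have : t = 1 := Fin.ext (by simpa using hxt)
      exact h1 (this ▸ ht)
  have hhubA : inl hub ∈ A := by
    rw [hAmem]
    rintro ⟨t, ht, hxt⟩
    rw [hxeq_inl] at hxt
    obtain ⟨ht2, hteq⟩ := hxt
    have := x'.injective hteq
    have := congrArg Fin.val this
    simp at this
    omega
  have hhubA' : hub ∈ A' ↔ ¬xb := by
    rw [hA'mem]
    have he : (∃ j ∈ T', x' j = hub) ↔ xb := by
      constructor
      · rintro ⟨j, hj, hjx⟩
        rw [hhub] at hjx
        have hj0 : j = 0 := x'.injective hjx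
        subst hj0
        rcases (hmemT' 0).mp hj with ⟨-, hxb⟩ | ⟨h1, -⟩
        · exact hxb
        · rw [Fin.val_zero] at h1; omega
      · intro hxb
        exact ⟨0, (hmemT' 0).mpr (Or.inl ⟨rfl, hxb⟩), hhub.symm⟩
    rw [he]
  have hinlA : ∀ a : V', inl a ∈ A ↔ (a ∈ A' ∨ (a = hub ∧ xb)) := by
    have hPB : ∀ a : V', (∃ t ∈ T, x t = inl a) ↔
        (∃ j : Fin (k+1), 1 ≤ j.val ∧ fsucc j ∈ T ∧ x' j = a) := by
      intro a
      constructor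
      · rintro ⟨t, ht, hxt⟩
        rw [hxeq_inl] at hxt
        obtain ⟨ht2, hteq⟩ := hxt
        refine ⟨fpred t, by simp only [fpred_val]; omega, ?_, hteq⟩
        have : fsucc (fpred t) = t := Fin.ext (by simp only [fsucc_val, fpred_val]; omega)
        rw [this]; exact ht
      · rintro ⟨j, hj1, hjT, hja⟩
        refine ⟨fsucc j, hjT, ?_⟩
        rw [hxeq_inl]
        refine ⟨by simp only [fsucc_val]; omega, ?_⟩
        have : fpred (fsucc j) = j := Fin.ext (by simp)
        rw [this]; exact hja
    intro a
    rw [hAmem, hA'mem, hPB a]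
    have e2 : (∃ j ∈ T', x' j = a) ↔ ((a = hub ∧ xb) ∨
        ∃ j : Fin (k+1), 1 ≤ j.val ∧ fsucc j ∈ T ∧ x' j = a) := by
      constructor
      · rintro ⟨j, hj, hja⟩
        rcases (hmemT' j).mp hj with ⟨rfl, hxb⟩ | ⟨h1, hT⟩
        · exact Or.inl ⟨by rw [← hja, hhub], hxb⟩
        · exact Or.inr ⟨j, h1, hT, hja⟩
      · rintro (⟨ha, hxb⟩ | ⟨j, h1, hT, hja⟩)
        · exact ⟨0, (hmemT' 0).mpr (Or.inl ⟨rfl, hxb⟩), by rw [ha, hhub]⟩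
        · exact ⟨j, (hmemT' j).mpr (Or.inr ⟨h1, hT⟩), hja⟩
    have hCP : (a = hub ∧ xb) → ¬∃ j : Fin (k+1), 1 ≤ j.val ∧ fsucc j ∈ T ∧ x' j = a := by
      rintro ⟨rfl, -⟩ ⟨j, hj1, -, hja⟩
      rw [hhub] at hja
      have := congrArg Fin.val (x'.injective hja)
      rw [Fin.val_zero] at this
      omega
    rw [e2]
    constructor
    · intro hnp
      by_cases hc : a = hub ∧ xb
      · exact Or.inr hc
      · exact Or.inl (fun h => h.elim hc hnp)
    · rintro (hn | hc)
      · exact fun hp => hn (Or.inr hp)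
      · exact hCP hc
  -- the forced edge set
  set F : Finset (Sym2 (V' ⊕ Fin 2)) :=
    if (0 : Fin (k+2)) ∈ T then
      (if (1 : Fin (k+2)) ∈ T then ∅ else {s(inr 1, inl hub)})
    else
      (if (1 : Fin (k+2)) ∈ T then {s(inr 0, inl hub)} else {s(inr 0, inr 1)}) with hFdef
  have hFedge : ∀ e ∈ F, e ∈ (SG Γ' hub).edgeSet := by
    intro e he
    rw [hFdef] at he
    by_cases h0 : (0 : Fin (k+2)) ∈ T <;> by_cases h1 : (1 : Fin (k+2)) ∈ T
    · rw [if_pos h0, if_pos h1] at he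
      exact absurd he (Finset.notMem_empty _)
    · rw [if_pos h0, if_neg h1, Finset.mem_singleton] at he
      subst he
      rw [SimpleGraph.mem_edgeSet]
      exact rfl
    · rw [if_neg h0, if_pos h1, Finset.mem_singleton] at he
      subst he
      rw [SimpleGraph.mem_edgeSet]
      exact rfl
    · rw [if_neg h0, if_neg h1, Finset.mem_singleton] at he
      subst he
      rw [SimpleGraph.mem_edgeSet]
      exact (by decide : (0 : Fin 2) ≠ 1)
  have hFsing : ∀ e ∈ F, ∀ f ∈ F, e = f := by
    intro e he f hf
    rw [hFdef] at he hf
    by_cases h0 : (0 : Fin (k+2)) ∈ T <;> by_cases h1 : (1 : Fin (k+2)) ∈ T <;>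
      simp [h0, h1] at he hf <;> rw [he, hf]
  have hFinl : ∀ a : V', (∃ e ∈ F, inl a ∈ e) ↔ (a = hub ∧ xb) := by
    intro a
    rw [hFdef]
    by_cases h0 : (0 : Fin (k+2)) ∈ T <;> by_cases h1 : (1 : Fin (k+2)) ∈ T <;>
      simp [h0, h1, hxbdef, Sym2.mem_iff]
  have hF0 : (∃ e ∈ F, inr 0 ∈ e) ↔ (0 : Fin (k+2)) ∉ T := by
    rw [hFdef]
    by_cases h0 : (0 : Fin (k+2)) ∈ T <;> by_cases h1 : (1 : Fin (k+2)) ∈ T <;>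
      simp [h0, h1, Sym2.mem_iff]
  have hF1 : (∃ e ∈ F, inr 1 ∈ e) ↔ (1 : Fin (k+2)) ∉ T := by
    rw [hFdef]
    by_cases h0 : (0 : Fin (k+2)) ∈ T <;> by_cases h1 : (1 : Fin (k+2)) ∈ T <;>
      simp [h0, h1, Sym2.mem_iff]
  -- the map from inner matchings to outer matchings
  have h01 : ∀ j : Fin 2, j = 0 ∨ j = 1 := by decide
  have hFinr' : ∀ e ∈ F, ∃ i : Fin 2, inr i ∈ e := by
    intro e he
    rw [hFdef] at he
    by_cases h0 : (0 : Fin (k+2)) ∈ T <;> by_cases h1 : (1 : Fin (k+2)) ∈ T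
    · rw [if_pos h0, if_pos h1] at he
      exact absurd he (Finset.notMem_empty _)
    · rw [if_pos h0, if_neg h1, Finset.mem_singleton] at he
      exact ⟨1, by rw [he]; simp⟩
    · rw [if_neg h0, if_pos h1, Finset.mem_singleton] at he
      exact ⟨0, by rw [he]; simp⟩
    · rw [if_neg h0, if_neg h1, Finset.mem_singleton] at he
      exact ⟨0, by rw [he]; simp⟩
  have hprop : ∀ M' : Finset (Sym2 V'), MatchOn Γ' A' M' →
      MatchOn (SG Γ' hub) A ((M'.image (Sym2.map inl)) ∪ F) := by
    intro M' hM'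
    have hsupM' : ∀ e ∈ M', ∀ a, a ∈ e → a ∈ A' := fun e he a ha => (hM'.2.2 a).2 ⟨e, he, ha⟩
    refine ⟨?_, ?_, ?_⟩
    · -- edges
      intro e he
      rcases Finset.mem_union.mp he with he | he
      · obtain ⟨e₀, he₀, rfl⟩ := Finset.mem_image.mp he
        have hedge := hM'.1 e₀ he₀
        obtain ⟨v, w, rfl⟩ := sym2_decomp e₀
        rw [SimpleGraph.mem_edgeSet] at hedge
        rw [Sym2.map_pair_eq, SimpleGraph.mem_edgeSet]
        exact hedge
      · exact hFedge e he
    · -- disjoint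
      intro e he f hf hef v hve hvf
      rcases Finset.mem_union.mp he with he | heF <;> rcases Finset.mem_union.mp hf with hf | hfF
      · obtain ⟨e₀, he₀, rfl⟩ := Finset.mem_image.mp he
        obtain ⟨f₀, hf₀, rfl⟩ := Finset.mem_image.mp hf
        have hef₀ : e₀ ≠ f₀ := fun h => hef (by rw [h])
        obtain ⟨a, ha, rfl⟩ := Sym2.mem_map.mp hve
        obtain ⟨b, hb, hba⟩ := Sym2.mem_map.mp hvf
        have hba' : b = a := inl_injective hba
        exact hM'.2.1 e₀ he₀ f₀ hf₀ hef₀ a ha (hba' ▸ hb)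
      · obtain ⟨e₀, he₀, rfl⟩ := Finset.mem_image.mp he
        obtain ⟨a, ha, rfl⟩ := Sym2.mem_map.mp hve
        obtain ⟨hahub, hxb⟩ := (hFinl a).mp ⟨f, hfF, hvf⟩
        have haA' : a ∈ A' := hsupM' e₀ he₀ a ha
        rw [hahub] at haA'
        exact (hhubA'.mp haA') hxb
      · obtain ⟨f₀, hf₀, rfl⟩ := Finset.mem_image.mp hf
        obtain ⟨a, ha, rfl⟩ := Sym2.mem_map.mp hvf
        obtain ⟨hahub, hxb⟩ := (hFinl a).mp ⟨e, heF, hve⟩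
        have haA' : a ∈ A' := hsupM' f₀ hf₀ a ha
        rw [hahub] at haA'
        exact (hhubA'.mp haA') hxb
      · exact hef (hFsing e heF f hfF)
    · -- support
      intro v
      cases v with
      | inl a =>
        rw [hinlA a]
        constructor
        · rintro (ha | hc)
          · obtain ⟨e₀, he₀, hae⟩ := (hM'.2.2 a).1 ha
            exact ⟨Sym2.map inl e₀, Finset.mem_union_left _ (Finset.mem_image_of_mem _ he₀),
              Sym2.mem_map.mpr ⟨a, hae, rfl⟩⟩
          · obtain ⟨e, heF, hae⟩ := (hFinl a).mpr hc
            exact ⟨e, Finset.mem_union_right _ heF, hae⟩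
        · rintro ⟨e, he, hae⟩
          rcases Finset.mem_union.mp he with he | heF
          · obtain ⟨e₀, he₀, rfl⟩ := Finset.mem_image.mp he
            obtain ⟨b, hb, hba⟩ := Sym2.mem_map.mp hae
            have hba' : b = a := inl_injective hba
            exact Or.inl (hba' ▸ hsupM' e₀ he₀ b hb)
          · exact Or.inr ((hFinl a).mp ⟨e, heF, hae⟩)
      | inr i =>
        have himg : ∀ e₀ ∈ M', inr i ∉ Sym2.map inl e₀ := by
          intro e₀ he₀ hmem
          obtain ⟨a, _, ha⟩ := Sym2.mem_map.mp hmem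
          exact absurd ha (by simp)
        have hiff : (∃ e ∈ M'.image (Sym2.map inl) ∪ F, inr i ∈ e) ↔ ∃ e ∈ F, inr i ∈ e := by
          constructor
          · rintro ⟨e, he, hie⟩
            rcases Finset.mem_union.mp he with he | heF
            · obtain ⟨e₀, he₀, rfl⟩ := Finset.mem_image.mp he
              exact absurd hie (himg e₀ he₀)
            · exact ⟨e, heF, hie⟩
          · rintro ⟨e, heF, hie⟩
            exact ⟨e, Finset.mem_union_right _ heF, hie⟩
        rcases h01 i with rfl | rfl
        · rw [h0A, hiff, hF0]
        · rw [h1A, hiff, hF1]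
  have key : Nat.card {M : Finset (Sym2 (V' ⊕ Fin 2)) // MatchOn (SG Γ' hub) A M}
      = Nat.card {M' : Finset (Sym2 V') // MatchOn Γ' A' M'} := by
    refine (Nat.card_eq_of_bijective
      (fun M' => ⟨(M' : {M' : Finset (Sym2 V') // MatchOn Γ' A' M'}).1.image (Sym2.map inl) ∪ F,
        hprop _ M'.2⟩) ⟨?_, ?_⟩).symm
    · -- injective
      rintro ⟨M1, hM1⟩ ⟨M2, hM2⟩ h
      have hsub : ∀ (N1 N2 : Finset (Sym2 V')),
          N1.image (Sym2.map inl) ∪ F = N2.image (Sym2.map inl) ∪ F → N1 ⊆ N2 := by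
        intro N1 N2 hU e₀ he₀
        have hmem : Sym2.map inl e₀ ∈ N2.image (Sym2.map inl) ∪ F := by
          rw [← hU]
          exact Finset.mem_union_left _ (Finset.mem_image_of_mem _ he₀)
        rcases Finset.mem_union.mp hmem with hm | hmF
        · obtain ⟨f₀, hf₀, hff⟩ := Finset.mem_image.mp hm
          exact (Sym2.map.injective inl_injective hff) ▸ hf₀
        · exfalso
          obtain ⟨i, hi⟩ := hFinr' _ hmF
          obtain ⟨a, _, ha⟩ := Sym2.mem_map.mp hi
          exact absurd ha (by simp)
      have h' := congrArg Subtype.val h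
      simp only at h'
      exact Subtype.ext (Finset.Subset.antisymm (hsub M1 M2 h') (hsub M2 M1 h'.symm))
    · -- surjective
      rintro ⟨M, hM⟩
      have hsupM : ∀ e ∈ M, ∀ v, v ∈ e → v ∈ A := fun e he v hv => (hM.2.2 v).2 ⟨e, he, hv⟩
      have huniq : ∀ e ∈ M, ∀ f ∈ M, ∀ v, v ∈ e → v ∈ f → e = f := by
        intro e he f hf v hve hvf
        by_contra hne
        exact hM.2.1 e he f hf hne v hve hvf
      have hpartner : ∀ v, v ∈ A → ∃ f ∈ M, ∃ z, f = s(v, z) ∧ (SG Γ' hub).Adj v z := by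
        intro v hv
        obtain ⟨f, hf, hvf⟩ := (hM.2.2 v).1 hv
        obtain ⟨z, hz⟩ := Sym2.mem_iff_exists.mp hvf
        refine ⟨f, hf, z, hz, ?_⟩
        have := hM.1 f hf
        rwa [hz, SimpleGraph.mem_edgeSet] at this
      have hFM : F ⊆ M := by
        intro e heF
        rw [hFdef] at heF
        by_cases h0 : (0 : Fin (k+2)) ∈ T <;> by_cases h1 : (1 : Fin (k+2)) ∈ T
        · rw [if_pos h0, if_pos h1] at heF
          exact absurd heF (Finset.notMem_empty _)
        · rw [if_pos h0, if_neg h1, Finset.mem_singleton] at heF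
          subst heF
          obtain ⟨f, hf, z, rfl, hadj⟩ := hpartner (inr 1) (h1A.mpr h1)
          cases z with
          | inl a =>
            have : a = hub := hadj
            rwa [this] at hf
          | inr j =>
            exfalso
            rcases h01 j with rfl | rfl
            · have : inr 0 ∈ A := hsupM _ hf (inr 0) (by simp)
              exact (h0A.mp this) h0
            · exact hadj rfl
        · rw [if_neg h0, if_pos h1, Finset.mem_singleton] at heF
          subst heF
          obtain ⟨f, hf, z, rfl, hadj⟩ := hpartner (inr 0) (h0A.mpr h0)
          cases z with
          | inl a =>
            have : a = hub := hadj
            rwa [this] at hf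
          | inr j =>
            exfalso
            rcases h01 j with rfl | rfl
            · exact hadj rfl
            · have : inr 1 ∈ A := hsupM _ hf (inr 1) (by simp)
              exact (h1A.mp this) h1
        · rw [if_neg h0, if_neg h1, Finset.mem_singleton] at heF
          subst heF
          obtain ⟨f, hf, z, rfl, hadj⟩ := hpartner (inr 0) (h0A.mpr h0)
          cases z with
          | inl a =>
            exfalso
            have ha : a = hub := hadj
            rw [ha] at hf
            obtain ⟨f', hf', z', rfl, hadj'⟩ := hpartner (inr 1) (h1A.mpr h1)
            cases z' with
            | inl b =>
              have hb : b = hub := hadj'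
              rw [hb] at hf'
              have hff' : s(inr (0 : Fin 2), inl hub) = s(inr 1, inl hub) :=
                huniq _ hf _ hf' (inl hub) (by simp) (by simp)
              rw [Sym2.eq_iff] at hff'
              simp at hff'
            | inr j' =>
              rcases h01 j' with rfl | rfl
              · have hff' : s(inr (0 : Fin 2), inl hub) = s(inr 1, inr 0) :=
                  huniq _ hf _ hf' (inr 0) (by simp) (by simp)
                rw [Sym2.eq_iff] at hff'
                simp at hff'
              · exact hadj' rfl
          | inr j =>
            rcases h01 j with rfl | rfl
            · exact absurd rfl hadj
            · exact hf
      have hrest : ∀ e ∈ M \ F, ∀ v, v ∈ e → ∃ a : V', v = inl a := by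
        intro e he v hv
        obtain ⟨heM, heF⟩ := Finset.mem_sdiff.mp he
        cases v with
        | inl a => exact ⟨a, rfl⟩
        | inr i =>
          exfalso
          have hvA : inr i ∈ A := hsupM e heM _ hv
          rcases h01 i with rfl | rfl
          · obtain ⟨f, hfF, hvf⟩ := hF0.mpr (h0A.mp hvA)
            exact heF ((huniq e heM f (hFM hfF) _ hv hvf) ▸ hfF)
          · obtain ⟨f, hfF, hvf⟩ := hF1.mpr (h1A.mp hvA)
            exact heF ((huniq e heM f (hFM hfF) _ hv hvf) ▸ hfF)
      set dl : V' ⊕ Fin 2 → V' := Sum.elim id (fun _ => hub) with hdl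
      have hmem_dl : ∀ e ∈ M \ F, ∀ a : V', a ∈ Sym2.map dl e ↔ inl a ∈ e := by
        intro e he a
        constructor
        · intro hmem
          obtain ⟨v, hv, hva⟩ := Sym2.mem_map.mp hmem
          obtain ⟨b, rfl⟩ := hrest e he v hv
          have : b = a := hva
          rwa [this] at hv
        · intro hmem
          exact Sym2.mem_map.mpr ⟨inl a, hmem, rfl⟩
      have hmapdl : ∀ e ∈ M \ F, Sym2.map inl (Sym2.map dl e) = e := by
        intro e he
        rw [Sym2.map_map]
        have hcg : ∀ v ∈ e, (inl ∘ dl) v = id v := by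
          intro v hv
          obtain ⟨a, rfl⟩ := hrest e he v hv
          rfl
        rw [Sym2.map_congr hcg, Sym2.map_id]
        rfl
      refine ⟨⟨(M \ F).image (Sym2.map dl), ?_, ?_, ?_⟩, ?_⟩
      · -- edges of Γ'
        intro e' he'
        obtain ⟨e, he, rfl⟩ := Finset.mem_image.mp he'
        have heM := (Finset.mem_sdiff.mp he).1
        have hedge := hM.1 e heM
        obtain ⟨v, w, rfl⟩ := sym2_decomp e
        obtain ⟨a, rfl⟩ := hrest _ he v (by simp)
        obtain ⟨b, rfl⟩ := hrest _ he w (by simp)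
        rw [SimpleGraph.mem_edgeSet] at hedge
        rw [Sym2.map_pair_eq, SimpleGraph.mem_edgeSet]
        exact hedge
      · -- disjoint
        intro e' he' f' hf' hne a hae haf
        obtain ⟨e, he, rfl⟩ := Finset.mem_image.mp he'
        obtain ⟨f, hf, rfl⟩ := Finset.mem_image.mp hf'
        have hef : e ≠ f := fun h => hne (by rw [h])
        have h1 : inl a ∈ e := (hmem_dl e he a).mp hae
        have h2 : inl a ∈ f := (hmem_dl f hf a).mp haf
        exact hM.2.1 e (Finset.mem_sdiff.mp he).1 f (Finset.mem_sdiff.mp hf).1 hef (inl a) h1 h2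
      · -- support
        intro a
        constructor
        · intro haA'
          have : inl a ∈ A := (hinlA a).mpr (Or.inl haA')
          obtain ⟨e, he, hae⟩ := (hM.2.2 (inl a)).1 this
          have heF : e ∉ F := by
            intro heF
            obtain ⟨hahub, hxb⟩ := (hFinl a).mp ⟨e, heF, hae⟩
            rw [hahub] at haA'
            exact (hhubA'.mp haA') hxb
          have he' : e ∈ M \ F := Finset.mem_sdiff.mpr ⟨he, heF⟩
          exact ⟨Sym2.map dl e, Finset.mem_image_of_mem _ he', (hmem_dl e he' a).mpr hae⟩
        · rintro ⟨e', he', hae⟩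
          obtain ⟨e, he, rfl⟩ := Finset.mem_image.mp he'
          have h1 : inl a ∈ e := (hmem_dl e he a).mp hae
          have h2 : inl a ∈ A := hsupM e (Finset.mem_sdiff.mp he).1 _ h1
          rcases (hinlA a).mp h2 with haA' | ⟨hahub, hxb⟩
          · exact haA'
          · exfalso
            obtain ⟨f, hfF, hf⟩ := (hFinl a).mpr ⟨hahub, hxb⟩
            have : e = f := huniq e (Finset.mem_sdiff.mp he).1 f (hFM hfF) (inl a) h1 hf
            exact (Finset.mem_sdiff.mp he).2 (this ▸ hfF)
      · -- g M' = M
        apply Subtype.ext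
        simp only
        have h1 : Finset.image (Sym2.map inl) (Finset.image (Sym2.map dl) (M \ F)) = M \ F := by
          calc Finset.image (Sym2.map inl) (Finset.image (Sym2.map dl) (M \ F))
              = Finset.image (fun e => Sym2.map inl (Sym2.map dl e)) (M \ F) :=
                Finset.image_image
            _ = Finset.image id (M \ F) := Finset.image_congr (fun e he => hmapdl e he)
            _ = M \ F := Finset.image_id
        rw [h1, Finset.sdiff_union_of_subset hFM]
  have hparity : Odd T'.card ↔ Odd T.card := by
    have hinj : Set.InjOn (fpred (k := k)) ↑(T.filter fun i => 2 ≤ i.val) := by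
      intro i hi j hj hij
      rw [Finset.mem_coe, Finset.mem_filter] at hi hj
      have := congrArg Fin.val hij
      simp only [fpred_val] at this
      exact Fin.ext (by omega)
    have hdisj : Disjoint (if xb then ({0} : Finset (Fin (k+1))) else ∅)
        ((T.filter fun i => 2 ≤ i.val).image fpred) := by
      rw [Finset.disjoint_left]
      intro j hj hj'
      obtain ⟨i, hi, hij⟩ := Finset.mem_image.mp hj'
      obtain ⟨-, hi2⟩ := Finset.mem_filter.mp hi
      by_cases hxb : xb
      · rw [if_pos hxb, Finset.mem_singleton] at hj
        have := congrArg Fin.val (hij.trans hj)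
        simp only [fpred_val, Fin.val_zero] at this
        omega
      · rw [if_neg hxb] at hj
        exact absurd hj (Finset.notMem_empty _)
    have hcT' : T'.card = (if xb then 1 else 0) + (T.filter fun i => 2 ≤ i.val).card := by
      rw [hT'def, Finset.card_union_of_disjoint hdisj, Finset.card_image_of_injOn hinj]
      congr 1
      by_cases hxb : xb
      · rw [if_pos hxb, if_pos hxb]
        exact Finset.card_singleton _
      · rw [if_neg hxb, if_neg hxb]
        exact Finset.card_empty
    have hsplit : (T.filter fun i => 2 ≤ i.val).card
        + (T.filter fun i => ¬ 2 ≤ i.val).card = T.card :=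
      Finset.card_filter_add_card_filter_not _
    have hlow : T.filter (fun i => ¬ 2 ≤ i.val) = T ∩ {0, 1} := by
      ext i
      simp only [Finset.mem_filter, Finset.mem_inter, Finset.mem_insert, Finset.mem_singleton]
      constructor
      · rintro ⟨hi, h2⟩
        refine ⟨hi, ?_⟩
        rcases (show i.val = 0 ∨ i.val = 1 by omega) with h | h
        · exact Or.inl (Fin.ext (by simp [h]))
        · exact Or.inr (Fin.ext (by simp [h]))
      · rintro ⟨hi, (rfl | rfl)⟩
        · exact ⟨hi, by simp⟩
        · exact ⟨hi, by simp⟩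
    rw [Nat.odd_iff, Nat.odd_iff]
    by_cases h0 : (0 : Fin (k+2)) ∈ T <;> by_cases h1 : (1 : Fin (k+2)) ∈ T
    · have hxbv : ¬xb := by simp [hxbdef, h0, h1]
      have hl : T ∩ {0, 1} = {0, 1} := by
        ext i
        simp only [Finset.mem_inter, Finset.mem_insert, Finset.mem_singleton]
        constructor
        · exact And.right
        · rintro (rfl | rfl)
          · exact ⟨h0, Or.inl rfl⟩
          · exact ⟨h1, Or.inr rfl⟩
      have hc01 : ({0, 1} : Finset (Fin (k+2))).card = 2 := by
        rw [Finset.card_insert_of_notMem (by simp [Fin.ext_iff]), Finset.card_singleton]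
      rw [if_neg hxbv] at hcT'
      rw [hlow, hl, hc01] at hsplit
      omega
    · have hxbv : xb := by simp [hxbdef, h0, h1]
      have hl : T ∩ {0, 1} = {0} := by
        ext i
        simp only [Finset.mem_inter, Finset.mem_insert, Finset.mem_singleton]
        constructor
        · rintro ⟨hi, (rfl | rfl)⟩
          · rfl
          · exact absurd hi h1
        · rintro rfl
          exact ⟨h0, Or.inl rfl⟩
      rw [if_pos hxbv] at hcT'
      rw [hlow, hl, Finset.card_singleton] at hsplit
      omega
    · have hxbv : xb := by simp [hxbdef, h0, h1]
      have hl : T ∩ {0, 1} = {1} := by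
        ext i
        simp only [Finset.mem_inter, Finset.mem_insert, Finset.mem_singleton]
        constructor
        · rintro ⟨hi, (rfl | rfl)⟩
          · exact absurd hi h0
          · rfl
        · rintro rfl
          exact ⟨h1, Or.inr rfl⟩
      rw [if_pos hxbv] at hcT'
      rw [hlow, hl, Finset.card_singleton] at hsplit
      omega
    · have hxbv : ¬xb := by simp [hxbdef, h0, h1]
      have hl : T ∩ {0, 1} = ∅ := by
        ext i
        simp only [Finset.mem_inter, Finset.mem_insert, Finset.mem_singleton,
          Finset.notMem_empty, iff_false, not_and]
        rintro hi (rfl | rfl)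
        · exact h0 hi
        · exact h1 hi
      rw [if_neg hxbv] at hcT'
      rw [hlow, hl, Finset.card_empty] at hsplit
      omega
  calc Nat.card {M : Finset (Sym2 (V' ⊕ Fin 2)) // MatchOn (SG Γ' hub) A M}
      = Nat.card {M' : Finset (Sym2 V') // MatchOn Γ' A' M'} := key
    _ = if Odd T'.card then 1 else 0 := hV' T'
    _ = if Odd T.card then 1 else 0 := by rw [if_congr hparity rfl rfl]

lemma goodN_all (n : ℕ) (hn : 1 ≤ n) : GoodN n := by
  induction n with
  | zero => omega
  | succ m ih =>
    match m, ih with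
    | 0, _ => exact goodN_one
    | (k+1), ih => exact goodN_step k (ih (by omega))

/-- for every odd `n ≥ 3` there are a finite graph `Γ` and `n` distinct
distinguished vertices `x 0, …, x (n-1)` such that for every subset `S` of the distinguished
vertices (given by `T : Finset (Fin n)`), the number of perfect matchings of `Γ − S` is `1`
if `|S|` is odd and `0` if `|S|` is even. -/
theorem stmt_5 (n : ℕ) (hn : 3 ≤ n) (hodd : Odd n) :
    ∃ (V : Type) (_ : Fintype V) (Γ : SimpleGraph V) (x : Fin n ↪ V),
      ∀ T : Finset (Fin n),
        Nat.card {M : Finset (Sym2 ↥{v : V | v ∉ ⇑x '' ↑T}) //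
          IsMatchingIn (Γ.induce {v : V | v ∉ ⇑x '' ↑T}) M ∧
          ∀ w : ↥{v : V | v ∉ ⇑x '' ↑T}, ∃ e ∈ M, w ∈ e} =
        if Odd T.card then 1 else 0 := by
  obtain ⟨V, instV, Γ, x, hG⟩ := goodN_all n (by omega)
  refine ⟨V, instV, Γ, x, fun T => ?_⟩
  rw [card_pm_eq]
  exact hG T
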